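/- In the setting where z_R is a unit eigenvector of V*(A - θI)*(A - θI)V with eigenvalue σ² > 0 achieving the minimal Rayleigh quotient, m = y + (I - yy*)z with V*(A - θI)*(A - θI)Vm = Ky, K = ‖(A - θI)Vm‖², τ > 1 the line-search scalar, and s = y + τ(I - yy*)z, one has z_R*s = z_R*y · (1 + τ(K - σ²)/σ²); in particular if z_R*y ≠ 0 then the ratios (z_R*s)/(z_R*y) and (z_R*(I - yy*)z)/(z_R*y) are real and nonnegative. -/

import Mathlib

open Matrix
open scoped ComplexConjugate

/-- Squared Euclidean norm of a complex vector. -/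
noncomputable def nsq {k : ℕ} (x : Fin k → ℂ) : ℝ := ∑ i, ‖x i‖ ^ 2

/-- Standard Hermitian inner product (conjugate-linear in the first argument). -/
noncomputable def cip {k : ℕ} (x y : Fin k → ℂ) : ℂ := ∑ i, conj (x i) * y i

/-- Orthogonal projection `(I - yy*) v`. -/
noncomputable def proj {k : ℕ} (y v : Fin k → ℂ) : Fin k → ℂ := v - cip y v • y


lemma cip_eq_dot {k : ℕ} (x y : Fin k → ℂ) : cip x y = star x ⬝ᵥ y := by
  simp [cip, dotProduct]

lemma nsq_nonneg' {k : ℕ} (x : Fin k → ℂ) : 0 ≤ nsq x :=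
  Finset.sum_nonneg fun i _ => sq_nonneg _

lemma cip_self {k : ℕ} (x : Fin k → ℂ) : cip x x = (nsq x : ℂ) := by
  simp [cip, nsq, Complex.conj_mul']

lemma nsq_smul' {k : ℕ} (c : ℂ) (x : Fin k → ℂ) : nsq (c • x) = ‖c‖^2 * nsq x := by
  simp [nsq, norm_smul, mul_pow, Finset.mul_sum]

lemma cip_add_right {k : ℕ} (x a b : Fin k → ℂ) : cip x (a + b) = cip x a + cip x b := by
  simp [cip, mul_add, Finset.sum_add_distrib]

lemma cip_add_left {k : ℕ} (a b x : Fin k → ℂ) : cip (a + b) x = cip a x + cip b x := by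
  simp [cip, add_mul, Finset.sum_add_distrib]

lemma cip_smul_right {k : ℕ} (c : ℂ) (x a : Fin k → ℂ) : cip x (c • a) = c * cip x a := by
  simp only [cip, Pi.smul_apply, smul_eq_mul, Finset.mul_sum]
  exact Finset.sum_congr rfl fun i _ => by ring

lemma cip_conj_symm {k : ℕ} (a b : Fin k → ℂ) : cip b a = conj (cip a b) := by
  simp [cip, map_sum, mul_comm]

theorem stmt11 {n k : ℕ} (A : Matrix (Fin n) (Fin n) ℂ) (V : Matrix (Fin n) (Fin k) ℂ)
    (θ : ℂ) (y z zR : Fin k → ℂ)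
    (hV : Vᴴ * V = 1) (hy : nsq y = 1)
    (M : Matrix (Fin k) (Fin k) ℂ)
    (hM : M = Vᴴ * (A - θ • 1)ᴴ * ((A - θ • 1) * V))
    (σ2 : ℝ) (hσpos : 0 < σ2) (hzR : nsq zR = 1)
    (heig : M.mulVec zR = ((σ2 : ℝ) : ℂ) • zR)
    (hσ : σ2 = nsq ((A - θ • 1).mulVec (V.mulVec zR)))
    (hσmin : ∀ x : Fin k → ℂ, nsq x = 1 → σ2 ≤ nsq ((A - θ • 1).mulVec (V.mulVec x)))
    (w : Fin k → ℂ) (hw : w = proj y z)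
    (K : ℝ) (hK : K = nsq ((A - θ • 1).mulVec (V.mulVec (y + w))))
    (hm : M.mulVec (y + w) = ((K : ℝ) : ℂ) • y)
    (τ : ℝ) (hτ : 1 < τ)
    (s : Fin k → ℂ) (hs : s = y + (τ : ℂ) • w) :
    cip zR s = cip zR y * ((1 + τ * (K - σ2) / σ2 : ℝ) : ℂ) ∧
      (cip zR y ≠ 0 →
        (cip zR s / cip zR y).im = 0 ∧ 0 ≤ (cip zR s / cip zR y).re ∧
        (cip zR w / cip zR y).im = 0 ∧ 0 ≤ (cip zR w / cip zR y).re) := by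
  
  -- M is Hermitian
  have hMH : Mᴴ = M := by
    subst hM; simp [Matrix.conjTranspose_mul, Matrix.mul_assoc]
  -- key identity: cip zR (M v) = σ2 * cip zR v
  have key : ∀ v : Fin k → ℂ, cip zR (M.mulVec v) = (σ2 : ℂ) * cip zR v := by
    intro v
    rw [cip_eq_dot, Matrix.dotProduct_mulVec]
    have h2 : star zR ᵥ* M = star (Mᴴ *ᵥ zR) := by
      rw [Matrix.star_mulVec, Matrix.conjTranspose_conjTranspose]
    rw [h2, hMH, heig, cip_eq_dot]
    simp [star_smul, smul_dotProduct, Complex.conj_ofReal]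
  -- orthogonality of y and w
  have hyw : cip y w = 0 := by
    rw [hw]
    have : cip y (proj y z) = cip y z - cip y z * cip y y := by
      simp only [proj, cip, Pi.sub_apply, Pi.smul_apply, smul_eq_mul, mul_sub,
        Finset.sum_sub_distrib, Finset.mul_sum]
      congr 1
      exact Finset.sum_congr rfl fun i _ => by ring
    rw [this, cip_self, hy]
    simp
  -- nsq (y + w) = 1 + nsq w
  have hnm : nsq (y + w) = 1 + nsq w := by
    have : ((nsq (y+w) : ℝ) : ℂ) = ((1 + nsq w : ℝ) : ℂ) := by
      rw [← cip_self, cip_add_right, cip_add_left, cip_add_left, cip_self, cip_self,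
        hyw, cip_conj_symm y w, hyw, hy]
      simp
    exact_mod_cast this
  have hnm1 : (1:ℝ) ≤ nsq (y + w) := by
    rw [hnm]; linarith [nsq_nonneg' w]
  -- K ≥ σ2
  have hKσ : σ2 ≤ K := by
    set t := nsq (y + w) with ht
    have htpos : 0 < t := lt_of_lt_of_le one_pos hnm1
    have hc : nsq ((((Real.sqrt t)⁻¹ : ℝ) : ℂ) • (y + w)) = 1 := by
      rw [nsq_smul']
      rw [Complex.norm_real, Real.norm_eq_abs, abs_of_nonneg (by positivity),
        inv_pow, Real.sq_sqrt htpos.le]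
      field_simp
      exact ht.symm
    have := hσmin _ hc
    rw [Matrix.mulVec_smul, Matrix.mulVec_smul, nsq_smul', ← hK] at this
    have hnorm : ‖((((Real.sqrt t)⁻¹ : ℝ)) : ℂ)‖^2 = t⁻¹ := by
      rw [Complex.norm_real, Real.norm_eq_abs, abs_of_nonneg (by positivity),
        inv_pow, Real.sq_sqrt htpos.le]
    rw [hnorm] at this
    calc σ2 ≤ σ2 * t := le_mul_of_one_le_right hσpos.le hnm1
    _ ≤ K := by
        rw [inv_mul_eq_div, le_div_iff₀ htpos] at this
        linarith
  -- main identity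
  have hσne : (σ2 : ℂ) ≠ 0 := by exact_mod_cast hσpos.ne'
  have hkey2 : (σ2 : ℂ) * (cip zR y + cip zR w) = (K : ℂ) * cip zR y := by
    have h1 := key (y + w)
    rw [hm, cip_smul_right, cip_add_right] at h1
    linear_combination -h1
  have hr : cip zR w = (((K - σ2)/σ2 : ℝ) : ℂ) * cip zR y := by
    push_cast
    rw [div_mul_eq_mul_div, eq_div_iff hσne]
    linear_combination hkey2
  have hrnn : (0:ℝ) ≤ (K - σ2)/σ2 := div_nonneg (by linarith) hσpos.le
  have hmain : cip zR s = cip zR y * ((1 + τ * (K - σ2) / σ2 : ℝ) : ℂ) := by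
    rw [hs, cip_add_right, cip_smul_right, hr]
    push_cast
    field_simp
  refine ⟨hmain, fun hne => ?_⟩
  have h1 : cip zR s / cip zR y = ((1 + τ * (K - σ2) / σ2 : ℝ) : ℂ) := by
    rw [hmain, mul_comm]; exact mul_div_cancel_right₀ _ hne
  have h2 : cip zR w / cip zR y = (((K - σ2)/σ2 : ℝ) : ℂ) := by
    rw [hr]; exact mul_div_cancel_right₀ _ hne
  rw [h1, h2]
  refine ⟨by simp, ?_, by simp, by simpa using hrnn⟩
  simp only [Complex.ofReal_re]
  have : τ * (K - σ2) / σ2 = τ * ((K - σ2)/σ2) := by ring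
  rw [this]
  nlinarith
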